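/- Let x, g ∈ ℝⁿ, λ > 0, and x̂ ∈ ℝⁿ with x̂ᵢ ≥ 0 for all i and ⟨g, x − x̂⟩ ≥ 0. Set d = [x − g]₊ − x and x⁺ = x + λd, and suppose there exist γᵢ ≥ 0 (i = 1,…,n) such that λdᵢ = −γᵢ gᵢ for every i. Then ‖x⁺ − x̂‖² − ‖x − x̂‖² ≤ 2·Σᵢ γᵢ gᵢ² + (λ² − 2λ)·‖d‖². (This is the key Lyapunov difference estimate for the discrete-time projection neural network, with L(y) = ‖y − x̂‖².) -/

import Mathlib

open RealInnerProductSpace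

/-- Key Lyapunov difference estimate for the discrete-time projection neural
network with Lyapunov function `L(y) = ‖y − x̂‖²`. -/
theorem stmt9 (n : ℕ) (x g xhat : EuclideanSpace ℝ (Fin n))
    (lam : ℝ) (hlam : 0 < lam)
    (hxhat : ∀ i, 0 ≤ xhat i) (hgx : 0 ≤ ⟪g, x - xhat⟫)
    (d : EuclideanSpace ℝ (Fin n))
    (hd : ∀ i, d i = max (x i - g i) 0 - x i)
    (xp : EuclideanSpace ℝ (Fin n)) (hxp : xp = x + lam • d)
    (γ : Fin n → ℝ) (hγ : ∀ i, 0 ≤ γ i)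
    (hγd : ∀ i, lam * d i = -(γ i * g i)) :
    ‖xp - xhat‖ ^ 2 - ‖x - xhat‖ ^ 2 ≤
      2 * (∑ i, γ i * g i ^ 2) + (lam ^ 2 - 2 * lam) * ‖d‖ ^ 2 := by
  have hnorm : ∀ v : EuclideanSpace ℝ (Fin n), ‖v‖ ^ 2 = ∑ i, (v i) ^ 2 := by
    intro v
    rw [← real_inner_self_eq_norm_sq]
    simp [PiLp.inner_apply, RCLike.inner_apply, sq]
    rw [← sq, EuclideanSpace.norm_sq_eq]
    exact Finset.sum_congr rfl fun i _ => by rw [Real.norm_eq_abs, sq_abs, sq]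
  have hinner : ⟪g, x - xhat⟫ = ∑ i, g i * (x i - xhat i) := by
    simp [PiLp.inner_apply, RCLike.inner_apply]
    exact Finset.sum_congr rfl fun i _ => mul_comm _ _
  -- componentwise projection inequality
  have hproj : ∀ i, d i * (x i - xhat i) + g i * d i + d i ^ 2
      ≤ g i * (xhat i - x i) := by
    intro i
    have hdi := hd i
    rcases le_or_gt (x i - g i) 0 with h | h
    · have hp : max (x i - g i) 0 = 0 := max_eq_right h
      rw [hp] at hdi
      nlinarith [hxhat i, mul_nonpos_of_nonpos_of_nonneg h (hxhat i)]
    · have hp : max (x i - g i) 0 = x i - g i := max_eq_left h.le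
      rw [hp] at hdi
      have hde : d i = -g i := by linarith
      rw [hde]
      nlinarith [sq_nonneg (g i)]
  have hsum : ∑ i, (d i * (x i - xhat i) + g i * d i + d i ^ 2)
      ≤ ∑ i, g i * (xhat i - x i) :=
    Finset.sum_le_sum fun i _ => hproj i
  have hT : ∑ i, g i * (xhat i - x i) ≤ 0 := by
    have h2 : ∑ i, g i * (xhat i - x i) = -∑ i, g i * (x i - xhat i) := by
      rw [← Finset.sum_neg_distrib]; exact Finset.sum_congr rfl fun i _ => by ring
    rw [h2, ← hinner]
    linarith [hgx]
  have hS : ∑ i, (d i * (x i - xhat i) + g i * d i + d i ^ 2) ≤ 0 := hsum.trans hT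
  have hxp' : ∀ i, (xp - xhat) i = x i + lam * d i - xhat i := by
    intro i; rw [hxp]; simp [PiLp.sub_apply, PiLp.add_apply, PiLp.smul_apply]
  have hx' : ∀ i, (x - xhat) i = x i - xhat i := fun i => rfl
  rw [hnorm, hnorm, hnorm]
  have key : ∑ i, ((xp - xhat) i) ^ 2 - ∑ i, ((x - xhat) i) ^ 2
      - (2 * (∑ i, γ i * g i ^ 2) + (lam ^ 2 - 2 * lam) * ∑ i, (d i) ^ 2)
      = 2 * lam * ∑ i, (d i * (x i - xhat i) + g i * d i + d i ^ 2) := by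
    simp only [Finset.mul_sum]
    rw [← Finset.sum_sub_distrib, ← Finset.sum_add_distrib, ← Finset.sum_sub_distrib]
    refine Finset.sum_congr rfl fun i _ => ?_
    rw [hxp' i, hx' i]
    linear_combination (-2 * g i) * hγd i
  nlinarith [mul_nonpos_of_nonneg_of_nonpos (by linarith : (0:ℝ) ≤ 2 * lam) hS]
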